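/- Let d ∈ ℝ and let θ : ℝ → ℝ be differentiable with θ'(δ) = cos²θ(δ) + d·sin²θ(δ) for all δ and θ(0) = 0. Then for every δ ∈ ℝ one has δ·η₀(−d·δ²)·cos θ(δ) = ξ(−d·δ²)·sin θ(δ). (That is, tan θ(δ) = δ·η₀(−d·δ²)/ξ(−d·δ²) wherever ξ(−d·δ²) ≠ 0: the Prüfer angle of the solution of y'' = −d·y with y(0) = 0, y'(0) = 1 is expressed through the CP functions ξ and η₀.) -/

import Mathlib

/-- The CP function `ξ`. -/
noncomputable def xi (z : ℝ) : ℝ :=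
  if z ≤ 0 then Real.cos (Real.sqrt (-z)) else Real.cosh (Real.sqrt z)

/-- The CP function `η₀`. -/
noncomputable def eta0 (z : ℝ) : ℝ :=
  if z < 0 then Real.sin (Real.sqrt (-z)) / Real.sqrt (-z)
  else if z = 0 then 1
  else Real.sinh (Real.sqrt z) / Real.sqrt z

open Set Real

lemma key_unique (d : ℝ) (θ : ℝ → ℝ)
    (hθ : Differentiable ℝ θ)
    (hode : ∀ δ, deriv θ δ = Real.cos (θ δ) ^ 2 + d * Real.sin (θ δ) ^ 2)
    (h0 : θ 0 = 0)
    (u v : ℝ → ℝ)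
    (hu : ∀ t, HasDerivAt u (v t) t)
    (hv : ∀ t, HasDerivAt v (-d * u t) t)
    (hu0 : u 0 = 0) (hv0 : v 0 = 1) :
    ∀ δ, u δ * Real.cos (θ δ) = v δ * Real.sin (θ δ) := by
  set F : ℝ → ℝ := fun t => u t * Real.cos (θ t) - v t * Real.sin (θ t) with hF
  set c : ℝ → ℝ := fun t => (d - 1) * (Real.sin (θ t) * Real.cos (θ t)) with hc
  have hθ' : ∀ t, HasDerivAt θ (Real.cos (θ t) ^ 2 + d * Real.sin (θ t) ^ 2) t := by
    intro t
    have := (hθ t).hasDerivAt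
    rwa [hode t] at this
  have hF' : ∀ t, HasDerivAt F (c t * F t) t := by
    intro t
    have h1 : HasDerivAt (fun t => u t * Real.cos (θ t))
        (v t * Real.cos (θ t) + u t * (-Real.sin (θ t) *
          (Real.cos (θ t) ^ 2 + d * Real.sin (θ t) ^ 2))) t :=
      (hu t).mul ((Real.hasDerivAt_cos (θ t)).comp t (hθ' t))
    have h2 : HasDerivAt (fun t => v t * Real.sin (θ t))
        ((-d * u t) * Real.sin (θ t) + v t * (Real.cos (θ t) *
          (Real.cos (θ t) ^ 2 + d * Real.sin (θ t) ^ 2))) t :=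
      (hv t).mul ((Real.hasDerivAt_sin (θ t)).comp t (hθ' t))
    have h3 := h1.sub h2
    refine h3.congr_deriv ?_
    have hpy : Real.sin (θ t) ^ 2 + Real.cos (θ t) ^ 2 = 1 := Real.sin_sq_add_cos_sq _
    simp only [hF, hc]
    linear_combination (-(d * u t * Real.sin (θ t) + v t * Real.cos (θ t))) * hpy
  have hK : ∀ t, LipschitzWith (Real.nnabs (d - 1)) (fun x : ℝ => c t * x) := by
    intro t
    apply LipschitzWith.of_dist_le_mul
    intro x y
    simp only [Real.dist_eq, hc]
    rw [← mul_sub, abs_mul]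
    have hb : |Real.sin (θ t) * Real.cos (θ t)| ≤ 1 := by
      rw [abs_mul]
      have h1 : |Real.sin (θ t)| ≤ 1 := abs_le.mpr ⟨Real.neg_one_le_sin _, Real.sin_le_one _⟩
      have h2 : |Real.cos (θ t)| ≤ 1 := abs_le.mpr ⟨Real.neg_one_le_cos _, Real.cos_le_one _⟩
      nlinarith [abs_nonneg (Real.sin (θ t)), abs_nonneg (Real.cos (θ t))]
    have : ((Real.nnabs (d-1) : NNReal) : ℝ) = |d - 1| := Real.coe_nnabs _
    rw [this]
    have hc' : |(d - 1) * (Real.sin (θ t) * Real.cos (θ t))| ≤ |d - 1| := by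
      rw [abs_mul]
      nlinarith [abs_nonneg (d - 1)]
    exact mul_le_mul_of_nonneg_right hc' (abs_nonneg _)
  intro δ
  have hmem : (0 : ℝ) ∈ Ioo (-(|δ| + 1)) (|δ| + 1) := by
    constructor <;> nlinarith [abs_nonneg δ]
  have hδmem : δ ∈ Ioo (-(|δ| + 1)) (|δ| + 1) := by
    constructor <;> nlinarith [abs_nonneg δ, neg_abs_le δ, le_abs_self δ]
  have := ODE_solution_unique_of_mem_Ioo (v := fun t x => c t * x)
    (s := fun _ => (univ : Set ℝ)) (K := Real.nnabs (d - 1))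
    (f := F) (g := fun _ => 0)
    (fun t _ => (hK t).lipschitzOnWith)
    hmem
    (fun t _ => ⟨hF' t, trivial⟩)
    (fun t _ => ⟨by simpa using hasDerivAt_const t (0:ℝ), trivial⟩)
    (by simp [hF, hu0, hv0, h0])
  have hz := this hδmem
  simp only [hF] at hz
  linarith [hz]

/-- The Prüfer angle `θ` of the solution of `y'' = -d·y`, `y(0) = 0`,
`y'(0) = 1` (i.e. `θ' = cos²θ + d·sin²θ`, `θ(0) = 0`) satisfies
`tan θ(δ) = δ·η₀(-d·δ²)/ξ(-d·δ²)`, written without denominators. -/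
theorem prufer_angle_cp (d : ℝ) (θ : ℝ → ℝ)
    (hθ : Differentiable ℝ θ)
    (hode : ∀ δ, deriv θ δ =
      Real.cos (θ δ) ^ 2 + d * Real.sin (θ δ) ^ 2)
    (h0 : θ 0 = 0) :
    ∀ δ : ℝ, δ * eta0 (-d * δ ^ 2) * Real.cos (θ δ)
      = xi (-d * δ ^ 2) * Real.sin (θ δ) := by
  rcases lt_trichotomy d 0 with hd | hd | hd
  · -- d < 0 : hyperbolic case
    set k := Real.sqrt (-d) with hkdef
    have hkpos : 0 < k := Real.sqrt_pos.mpr (by linarith)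
    have hk2 : k ^ 2 = -d := Real.sq_sqrt (by linarith)
    have hkt : ∀ t : ℝ, HasDerivAt (fun t : ℝ => k * t) k t := by
      intro t; simpa using (hasDerivAt_id t).const_mul k
    have hu : ∀ t, HasDerivAt (fun t => Real.sinh (k * t) / k) (Real.cosh (k * t)) t := by
      intro t
      have h := ((Real.hasDerivAt_sinh (k * t)).comp t (hkt t)).div_const k
      refine h.congr_deriv ?_
      field_simp
    have hv : ∀ t, HasDerivAt (fun t => Real.cosh (k * t))
        (-d * (Real.sinh (k * t) / k)) t := by
      intro t
      have h := (Real.hasDerivAt_cosh (k * t)).comp t (hkt t)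
      refine h.congr_deriv ?_
      rw [← hk2]
      field_simp
    have key := key_unique d θ hθ hode h0 _ _ hu hv (by simp) (by simp)
    intro δ
    rcases eq_or_ne δ 0 with rfl | hδ
    · simp [eta0, xi, h0]
    · have hδ2 : (0:ℝ) < δ ^ 2 := by positivity
      have hzpos : 0 < -d * δ ^ 2 := by nlinarith
      have hsq : Real.sqrt (-d * δ ^ 2) = k * |δ| := by
        rw [Real.sqrt_mul (by linarith) (δ ^ 2), Real.sqrt_sq_eq_abs]
      have hxieq : xi (-d * δ ^ 2) = Real.cosh (k * δ) := by
        rw [xi, if_neg (not_le.mpr hzpos), hsq]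
        rcases le_or_gt 0 δ with h | h
        · rw [abs_of_nonneg h]
        · rw [abs_of_neg h, mul_neg, Real.cosh_neg]
      have hetaeq : δ * eta0 (-d * δ ^ 2) = Real.sinh (k * δ) / k := by
        rw [eta0, if_neg (not_lt.mpr hzpos.le), if_neg hzpos.ne', hsq]
        rcases le_or_gt 0 δ with h | h
        · rw [abs_of_nonneg h]
          have hδ' : δ ≠ 0 := hδ
          field_simp
        · rw [abs_of_neg h, mul_neg, Real.sinh_neg]
          have hδ' : δ ≠ 0 := hδ
          field_simp
      rw [hxieq, hetaeq]
      exact key δ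
  · -- d = 0
    subst hd
    have key := key_unique 0 θ hθ hode h0 (fun t => t) (fun _ => 1)
      (fun t => hasDerivAt_id t) (fun t => by simpa using hasDerivAt_const t (1:ℝ))
      rfl rfl
    intro δ
    have := key δ
    simpa [eta0, xi] using this
  · -- d > 0 : trigonometric case
    set k := Real.sqrt d with hkdef
    have hkpos : 0 < k := Real.sqrt_pos.mpr hd
    have hk2 : k ^ 2 = d := Real.sq_sqrt hd.le
    have hkt : ∀ t : ℝ, HasDerivAt (fun t : ℝ => k * t) k t := by
      intro t; simpa using (hasDerivAt_id t).const_mul k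
    have hu : ∀ t, HasDerivAt (fun t => Real.sin (k * t) / k) (Real.cos (k * t)) t := by
      intro t
      have h := ((Real.hasDerivAt_sin (k * t)).comp t (hkt t)).div_const k
      refine h.congr_deriv ?_
      field_simp
    have hv : ∀ t, HasDerivAt (fun t => Real.cos (k * t))
        (-d * (Real.sin (k * t) / k)) t := by
      intro t
      have h := (Real.hasDerivAt_cos (k * t)).comp t (hkt t)
      refine h.congr_deriv ?_
      rw [← hk2]
      field_simp
    have key := key_unique d θ hθ hode h0 _ _ hu hv (by simp) (by simp)
    intro δ
    rcases eq_or_ne δ 0 with rfl | hδ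
    · simp [eta0, xi, h0]
    · have hδ2 : (0:ℝ) < δ ^ 2 := by positivity
      have hzneg : -d * δ ^ 2 < 0 := by nlinarith
      have hsq : Real.sqrt (-(-d * δ ^ 2)) = k * |δ| := by
        rw [show -(-d * δ ^ 2) = d * δ ^ 2 by ring,
          Real.sqrt_mul hd.le (δ ^ 2), Real.sqrt_sq_eq_abs]
      have hxieq : xi (-d * δ ^ 2) = Real.cos (k * δ) := by
        rw [xi, if_pos hzneg.le, hsq]
        rcases le_or_gt 0 δ with h | h
        · rw [abs_of_nonneg h]
        · rw [abs_of_neg h, mul_neg, Real.cos_neg]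
      have hetaeq : δ * eta0 (-d * δ ^ 2) = Real.sin (k * δ) / k := by
        rw [eta0, if_pos hzneg, hsq]
        rcases le_or_gt 0 δ with h | h
        · rw [abs_of_nonneg h]
          have hδ' : δ ≠ 0 := hδ
          field_simp
        · rw [abs_of_neg h, mul_neg, Real.sin_neg]
          have hδ' : δ ≠ 0 := hδ
          field_simp
      rw [hxieq, hetaeq]
      exact key δ
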